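/- Let 0 < α, β < 1, ρ > 1, C ≥ 0, and let κ : [0,T] → W be continuous with κ(0) = 0, |(δ̂κ)_{ts}| ≤ C (t−s)^α for all (t,s) ∈ Δ_T, and |(δ̂κ)_{ts}| ≤ C s^{−β} (t−s)^ρ for all 0 < s ≤ t ≤ T. Then κ(t) = 0 for all t ∈ [0,T]. -/

import Mathlib

open Real Finset

lemma mvt_step (p : ℝ) (hp : 0 < p) (hp1 : p ≤ 1) (x : ℝ) (hx : 0 ≤ x) :
    p * (x+1) ^ (p-1) ≤ (x+1) ^ p - x ^ p := by
  have hcont : ContinuousOn (fun y : ℝ => y ^ p) (Set.Icc x (x+1)) := by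
    intro y _
    exact (Real.continuousAt_rpow_const y p (Or.inr hp.le)).continuousWithinAt
  have hx1 : x < x + 1 := by linarith
  have hderiv : ∀ y ∈ Set.Ioo x (x+1), HasDerivAt (fun y : ℝ => y ^ p) (p * y ^ (p-1)) y := by
    intro y hy
    have hy0 : y ≠ 0 := by nlinarith [hy.1]
    simpa [mul_comm] using Real.hasDerivAt_rpow_const (p := p) (Or.inl hy0)
  obtain ⟨c, hc, hceq⟩ := exists_hasDerivAt_eq_slope (fun y : ℝ => y ^ p)
    (fun y => p * y ^ (p-1)) hx1 hcont hderiv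
  have hc0 : 0 < c := lt_of_le_of_lt hx hc.1
  have : p * c ^ (p-1) = (x+1) ^ p - x ^ p := by
    rw [hceq]; field_simp; ring
  rw [← this]
  exact mul_le_mul_of_nonneg_left
    (Real.rpow_le_rpow_of_nonpos hc0 hc.2.le (by linarith)) hp.le

lemma sum_pow_neg_le (β : ℝ) (hβ0 : 0 < β) (hβ1 : β < 1) (n : ℕ) :
    ∑ i ∈ Finset.range n, ((i:ℝ)+1) ^ (-β) ≤ (n:ℝ) ^ (1-β) / (1-β) := by
  have hp : 0 < 1 - β := by linarith
  induction n with
  | zero => simp [Real.zero_rpow hp.ne']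
  | succ n ih =>
    rw [Finset.sum_range_succ]
    have key := mvt_step (1-β) hp (by linarith) n (Nat.cast_nonneg n)
    have : ((n:ℝ)+1) ^ (-β) ≤ ((n:ℝ)+1) ^ (1-β) / (1-β) - (n:ℝ) ^ (1-β) / (1-β) := by
      rw [div_sub_div_same, le_div_iff₀ hp]
      have : (1-β) - 1 = -β := by ring
      rw [← this]
      linarith [key]
    push_cast
    linarith

/-- Uniqueness lemma with a weighted bound. -/
theorem kappa_eq_zero_of_hat_delta_weighted_small
    {W : Type*} [NormedAddCommGroup W] [NormedSpace ℝ W]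
    (T : ℝ) (hT : 0 < T)
    (S : ℝ → W →L[ℝ] W)
    (hS0 : S 0 = ContinuousLinearMap.id ℝ W)
    (hSadd : ∀ t s : ℝ, 0 ≤ t → 0 ≤ s → S (t + s) = (S t).comp (S s))
    (cS : ℝ) (hScS : ∀ t : ℝ, 0 ≤ t → t ≤ T → ‖S t‖ ≤ cS)
    (α β ρ C : ℝ) (hα0 : 0 < α) (hα1 : α < 1) (hβ0 : 0 < β) (hβ1 : β < 1)
    (hρ : 1 < ρ) (hC : 0 ≤ C)
    (κ : ℝ → W) (hκcont : ContinuousOn κ (Set.Icc 0 T)) (hκ0 : κ 0 = 0)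
    (hκ1 : ∀ s t : ℝ, 0 ≤ s → s ≤ t → t ≤ T →
      ‖κ t - S (t - s) (κ s)‖ ≤ C * (t - s) ^ α)
    (hκ2 : ∀ s t : ℝ, 0 < s → s ≤ t → t ≤ T →
      ‖κ t - S (t - s) (κ s)‖ ≤ C * s ^ (-β) * (t - s) ^ ρ) :
    ∀ t : ℝ, 0 ≤ t → t ≤ T → κ t = 0 := by
  intro t ht0 htT
  rcases eq_or_lt_of_le ht0 with h0 | h0
  · rw [← h0]; exact hκ0
  have hcS0 : 0 ≤ cS := le_trans (norm_nonneg _) (hScS 0 le_rfl hT.le)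
  have hβ' : (0:ℝ) < 1 - β := by linarith
  -- main estimate
  have hnorm : ∀ n : ℕ, 1 ≤ n →
      ‖κ t‖ ≤ cS * (C * (t/(n:ℝ))^α + C * (t/(n:ℝ))^(ρ-β) * ((n:ℝ)^(1-β)/(1-β))) := by
    intro n hn
    have hn0 : (0:ℝ) < (n:ℝ) := by exact_mod_cast Nat.pos_of_ne_zero (by omega)
    set h := t / (n:ℝ) with hh
    have hh0 : 0 < h := div_pos h0 hn0
    have hnh : (n:ℝ) * h = t := by rw [hh]; field_simp
    have hmul : ∀ i : ℕ, i ≤ n → (i:ℝ) * h ≤ t := by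
      intro i hi
      have h1 : (i:ℝ) ≤ (n:ℝ) := by exact_mod_cast hi
      nlinarith
    have hhT : h ≤ T := by
      have h1 : (1:ℝ) * h ≤ t := by
        have := hmul 1 hn; push_cast at this; linarith
      linarith
    -- telescoping identity
    have tel : κ t = ∑ i ∈ Finset.range n,
        S (t - ((i:ℝ)+1)*h) (κ (((i:ℝ)+1)*h) - S h (κ ((i:ℝ)*h))) := by
      have step : ∀ i ∈ Finset.range n,
          S (t - ((i:ℝ)+1)*h) (κ (((i:ℝ)+1)*h) - S h (κ ((i:ℝ)*h)))
            = (fun j : ℕ => S (t - (j:ℝ)*h) (κ ((j:ℝ)*h))) (i+1)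
              - (fun j : ℕ => S (t - (j:ℝ)*h) (κ ((j:ℝ)*h))) i := by
        intro i hi
        have hi' : i + 1 ≤ n := Finset.mem_range.mp hi
        have h1 : (0:ℝ) ≤ t - ((i:ℝ)+1)*h := by
          have := hmul (i+1) hi'; push_cast at this; linarith
        have h2 : S (t - (i:ℝ)*h) = (S (t - ((i:ℝ)+1)*h)).comp (S h) := by
          rw [← hSadd (t - ((i:ℝ)+1)*h) h h1 hh0.le]
          congr 1; ring
        simp only [map_sub, h2]
        push_cast
        simp [ContinuousLinearMap.comp_apply]
      rw [Finset.sum_congr rfl step,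
        Finset.sum_range_sub (fun j : ℕ => S (t - (j:ℝ)*h) (κ ((j:ℝ)*h)))]
      rw [show t - (n:ℝ)*h = 0 by rw [hnh]; ring, hnh, hS0]
      simp [hκ0]
    -- norm estimate on increments
    have hbound : ∑ i ∈ Finset.range n, ‖κ (((i:ℝ)+1)*h) - S h (κ ((i:ℝ)*h))‖
        ≤ C * h^α + C * h^(ρ-β) * ((n:ℝ)^(1-β)/(1-β)) := by
      rw [Finset.range_eq_Ico, Finset.sum_eq_sum_Ico_succ_bot (by omega : 0 < n)]
      have term0 : ‖κ ((((0:ℕ):ℝ)+1)*h) - S h (κ (((0:ℕ):ℝ)*h))‖ ≤ C * h^α := by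
        have := hκ1 0 h le_rfl hh0.le hhT
        simpa using this
      have hrest : ∑ i ∈ Finset.Ico 1 n, ‖κ (((i:ℝ)+1)*h) - S h (κ ((i:ℝ)*h))‖
          ≤ C * h^(ρ-β) * ((n:ℝ)^(1-β)/(1-β)) := by
        have hterm : ∀ i ∈ Finset.Ico 1 n,
            ‖κ (((i:ℝ)+1)*h) - S h (κ ((i:ℝ)*h))‖ ≤ (C * h^(ρ-β)) * (i:ℝ)^(-β) := by
          intro i hi
          obtain ⟨hi1, hi2⟩ := Finset.mem_Ico.mp hi
          have hi1' : (1:ℝ) ≤ (i:ℝ) := by exact_mod_cast hi1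
          have hs0 : 0 < (i:ℝ)*h := by nlinarith
          have hst : (i:ℝ)*h ≤ ((i:ℝ)+1)*h := by nlinarith
          have htT' : ((i:ℝ)+1)*h ≤ T := by
            have := hmul (i+1) hi2; push_cast at this; linarith
          have hb := hκ2 ((i:ℝ)*h) (((i:ℝ)+1)*h) hs0 hst htT'
          rw [show ((i:ℝ)+1)*h - (i:ℝ)*h = h by ring] at hb
          refine le_trans hb (le_of_eq ?_)
          rw [Real.mul_rpow (Nat.cast_nonneg i) hh0.le]
          rw [show C * ((i:ℝ)^(-β) * h^(-β)) * h^ρ = C * (h^(-β) * h^ρ) * (i:ℝ)^(-β) from by ring]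
          rw [← Real.rpow_add hh0]
          congr 2
          ring
        calc ∑ i ∈ Finset.Ico 1 n, ‖κ (((i:ℝ)+1)*h) - S h (κ ((i:ℝ)*h))‖
            ≤ ∑ i ∈ Finset.Ico 1 n, (C * h^(ρ-β)) * (i:ℝ)^(-β) :=
              Finset.sum_le_sum hterm
          _ = (C * h^(ρ-β)) * ∑ i ∈ Finset.Ico 1 n, (i:ℝ)^(-β) := by
              rw [Finset.mul_sum]
          _ ≤ (C * h^(ρ-β)) * ((n:ℝ)^(1-β)/(1-β)) := by
              refine mul_le_mul_of_nonneg_left ?_ (by positivity)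
              have e1 : ∑ i ∈ Finset.Ico 1 n, (i:ℝ)^(-β)
                  = ∑ j ∈ Finset.range (n-1), (((1+j:ℕ):ℝ))^(-β) := by
                rw [Finset.sum_Ico_eq_sum_range]
              rw [e1]
              have e2 : ∑ j ∈ Finset.range (n-1), (((1+j:ℕ):ℝ))^(-β)
                  = ∑ j ∈ Finset.range (n-1), ((j:ℝ)+1)^(-β) := by
                refine Finset.sum_congr rfl fun j _ => ?_
                push_cast; ring_nf
              rw [e2]
              refine le_trans (sum_pow_neg_le β hβ0 hβ1 (n-1)) ?_
              have hc : (((n-1:ℕ)):ℝ) ^ (1-β) ≤ (n:ℝ) ^ (1-β) :=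
                Real.rpow_le_rpow (Nat.cast_nonneg _)
                  (by exact_mod_cast Nat.sub_le n 1) hβ'.le
              exact div_le_div_of_nonneg_right hc hβ'.le
          _ = C * h^(ρ-β) * ((n:ℝ)^(1-β)/(1-β)) := by ring
      exact add_le_add term0 hrest
    -- combine
    rw [tel]
    calc ‖∑ i ∈ Finset.range n, S (t - ((i:ℝ)+1)*h) (κ (((i:ℝ)+1)*h) - S h (κ ((i:ℝ)*h)))‖
        ≤ ∑ i ∈ Finset.range n, ‖S (t - ((i:ℝ)+1)*h) (κ (((i:ℝ)+1)*h) - S h (κ ((i:ℝ)*h)))‖ :=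
          norm_sum_le _ _
      _ ≤ ∑ i ∈ Finset.range n, cS * ‖κ (((i:ℝ)+1)*h) - S h (κ ((i:ℝ)*h))‖ := by
          refine Finset.sum_le_sum fun i hi => ?_
          have hi' : i + 1 ≤ n := Finset.mem_range.mp hi
          have h1 : (0:ℝ) ≤ t - ((i:ℝ)+1)*h := by
            have := hmul (i+1) hi'; push_cast at this; linarith
          have h2 : t - ((i:ℝ)+1)*h ≤ T := by nlinarith
          calc ‖S (t - ((i:ℝ)+1)*h) (κ (((i:ℝ)+1)*h) - S h (κ ((i:ℝ)*h)))‖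
              ≤ ‖S (t - ((i:ℝ)+1)*h)‖ * ‖κ (((i:ℝ)+1)*h) - S h (κ ((i:ℝ)*h))‖ :=
                ContinuousLinearMap.le_opNorm _ _
            _ ≤ cS * ‖κ (((i:ℝ)+1)*h) - S h (κ ((i:ℝ)*h))‖ :=
                mul_le_mul_of_nonneg_right (hScS _ h1 h2) (norm_nonneg _)
      _ = cS * ∑ i ∈ Finset.range n, ‖κ (((i:ℝ)+1)*h) - S h (κ ((i:ℝ)*h))‖ := by
          rw [Finset.mul_sum]
      _ ≤ cS * (C * h^α + C * h^(ρ-β) * ((n:ℝ)^(1-β)/(1-β))) :=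
          mul_le_mul_of_nonneg_left hbound hcS0
  -- limit argument
  have hlim : Filter.Tendsto
      (fun n : ℕ => (cS*C*t^α) * (n:ℝ)^(-α) + (cS*C*t^(ρ-β)/(1-β)) * (n:ℝ)^(-(ρ-1)))
      Filter.atTop (nhds 0) := by
    have l1 : Filter.Tendsto (fun n : ℕ => ((n:ℝ))^(-α)) Filter.atTop (nhds 0) :=
      (tendsto_rpow_neg_atTop hα0).comp tendsto_natCast_atTop_atTop
    have l2 : Filter.Tendsto (fun n : ℕ => ((n:ℝ))^(-(ρ-1))) Filter.atTop (nhds 0) :=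
      (tendsto_rpow_neg_atTop (by linarith)).comp tendsto_natCast_atTop_atTop
    have := (l1.const_mul (cS*C*t^α)).add (l2.const_mul (cS*C*t^(ρ-β)/(1-β)))
    simpa using this
  have hle : ‖κ t‖ ≤ 0 := by
    refine ge_of_tendsto hlim ?_
    filter_upwards [Filter.eventually_ge_atTop 1] with n hn
    have hn0 : (0:ℝ) < (n:ℝ) := by exact_mod_cast Nat.pos_of_ne_zero (by omega)
    refine le_trans (hnorm n hn) (le_of_eq ?_)
    have e1 : (t/(n:ℝ))^α = t^α * (n:ℝ)^(-α) := by
      rw [Real.div_rpow h0.le hn0.le, Real.rpow_neg hn0.le, div_eq_mul_inv]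
    have e2 : (t/(n:ℝ))^(ρ-β) * ((n:ℝ)^(1-β)) = t^(ρ-β) * (n:ℝ)^(-(ρ-1)) := by
      rw [Real.div_rpow h0.le hn0.le, div_mul_eq_mul_div, mul_div_assoc,
        ← Real.rpow_sub hn0]
      congr 2
      ring
    rw [e1]
    have e3 : C * (t/(n:ℝ))^(ρ-β) * ((n:ℝ)^(1-β)/(1-β))
        = (C/(1-β)) * ((t/(n:ℝ))^(ρ-β) * ((n:ℝ)^(1-β))) := by ring
    rw [e3, e2]
    ring
  have := norm_nonneg (κ t)
  have : ‖κ t‖ = 0 := le_antisymm hle this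
  exact norm_eq_zero.mp this
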